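/- For m ≥ 2 and n ≥ 1 with base m expansion n = Σ_{i≥ℓ} α_i·m^i where α_ℓ ≥ 1 is the lowest nonzero digit: if ℓ = 0 (i.e., m does not divide n) then c_m(mn) ≡ α_0 + (α_0 − 1)·Σ_{i=1}^{∞} α_1·α_2···α_i (mod m). -/

import Mathlib

open Finset

noncomputable def cm (m n : ℕ) : ℕ :=
  Nat.card {f : ℕ →₀ ℕ // (∑ i ∈ f.support, f i * m ^ i = n) ∧
    ∀ i k, f i ≠ 0 → k ≤ i → f k ≠ 0}

def CMval (m : ℕ) (f : ℕ →₀ ℕ) : ℕ := ∑ i ∈ f.support, f i * m ^ i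

def CM (m N : ℕ) := {f : ℕ →₀ ℕ // CMval m f = N ∧ ∀ i k, f i ≠ 0 → k ≤ i → f k ≠ 0}

lemma cm_def (m N : ℕ) : cm m N = Nat.card (CM m N) := rfl

lemma CMval_le (m : ℕ) (f : ℕ →₀ ℕ) (i : ℕ) : f i * m ^ i ≤ CMval m f := by
  by_cases h : i ∈ f.support
  · exact Finset.single_le_sum (f := fun i => f i * m ^ i) (fun j _ => Nat.zero_le _) h
  · simp [Finsupp.notMem_support_iff.mp h]

lemma CM_finite (m N : ℕ) (hm : 2 ≤ m) : Finite (CM m N) := by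
  have hm0 : 0 < m := by omega
  have key : ∀ f : CM m N, ∀ i, f.1 i ≤ N := by
    intro f i
    have h1 : f.1 i * m ^ i ≤ N := by
      have := CMval_le m f.1 i; rw [f.2.1] at this; exact this
    calc f.1 i ≤ f.1 i * m ^ i := Nat.le_mul_of_pos_right _ (Nat.pow_pos (n := i) hm0)
    _ ≤ N := h1
  have supp : ∀ f : CM m N, ∀ i, N < i → f.1 i = 0 := by
    intro f i hi
    by_contra h
    have h1 : f.1 i * m ^ i ≤ N := by
      have := CMval_le m f.1 i; rw [f.2.1] at this; exact this
    have h2 : m ^ i ≤ f.1 i * m ^ i := Nat.le_mul_of_pos_left _ (Nat.pos_of_ne_zero h)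
    have h3 : i < m ^ i := Nat.lt_pow_self (n := i) (by omega)
    omega
  apply Finite.of_injective (fun f : CM m N => fun i : Fin (N + 1) => (⟨f.1 i, by
    exact Nat.lt_succ_of_le (key f i)⟩ : Fin (N + 1)))
  intro f g h
  apply Subtype.ext
  ext i
  rcases le_or_gt i N with hi | hi
  · have := congrFun h ⟨i, Nat.lt_succ_of_le hi⟩
    simpa using congrArg Fin.val this
  · rw [supp f i hi, supp g i hi]


noncomputable def tailF (f : ℕ →₀ ℕ) : ℕ →₀ ℕ :=
  Finsupp.comapDomain Nat.succ f (Nat.succ_injective.injOn)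

lemma tailF_apply (f : ℕ →₀ ℕ) (i : ℕ) : tailF f i = f (i + 1) := rfl

noncomputable def consF (c : ℕ) (g : ℕ →₀ ℕ) : ℕ →₀ ℕ :=
  Finsupp.single 0 c + Finsupp.embDomain ⟨Nat.succ, Nat.succ_injective⟩ g

lemma consF_zero (c : ℕ) (g : ℕ →₀ ℕ) : consF c g 0 = c := by
  have h : Finsupp.embDomain ⟨Nat.succ, Nat.succ_injective⟩ g 0 = 0 := by
    apply Finsupp.embDomain_notin_range
    rintro ⟨a, ha⟩; exact Nat.succ_ne_zero a ha
  simp [consF, h]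

lemma consF_succ (c : ℕ) (g : ℕ →₀ ℕ) (i : ℕ) : consF c g (i + 1) = g i := by
  have h : Finsupp.embDomain ⟨Nat.succ, Nat.succ_injective⟩ g (i + 1) = g i :=
    Finsupp.embDomain_apply_self _ g i
  simp [consF, h, Finsupp.single_apply_eq_zero]

lemma tailF_consF (c : ℕ) (g : ℕ →₀ ℕ) : tailF (consF c g) = g := by
  ext i; rw [tailF_apply, consF_succ]

lemma consF_eta (f : ℕ →₀ ℕ) : consF (f 0) (tailF f) = f := by
  ext i; cases i with
  | zero => rw [consF_zero]
  | succ i => rw [consF_succ, tailF_apply]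


lemma CMval_eq_sum_range (m : ℕ) (f : ℕ →₀ ℕ) (B : ℕ) (hB : ∀ i, f i ≠ 0 → i < B) :
    CMval m f = ∑ i ∈ Finset.range B, f i * m ^ i := by
  apply Finset.sum_subset
  · intro i hi
    exact Finset.mem_range.mpr (hB i (Finsupp.mem_support_iff.mp hi))
  · intro i _ hi
    simp [Finsupp.notMem_support_iff.mp hi]

lemma CMval_tail (m : ℕ) (f : ℕ →₀ ℕ) : CMval m f = f 0 + m * CMval m (tailF f) := by
  set B := f.support.sup id with hBdef
  have hB : ∀ i, f i ≠ 0 → i < B + 1 := fun i hi =>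
    Nat.lt_succ_of_le (Finset.le_sup (f := id) (Finsupp.mem_support_iff.mpr hi))
  have hB' : ∀ i, tailF f i ≠ 0 → i < B := by
    intro i hi
    have := hB (i + 1) (by rwa [tailF_apply] at hi)
    omega
  rw [CMval_eq_sum_range m f (B + 1) hB, CMval_eq_sum_range m (tailF f) B hB',
    Finset.sum_range_succ']
  simp only [tailF_apply, pow_succ, pow_zero, mul_one, Finset.mul_sum]
  rw [add_comm]
  congr 1
  apply Finset.sum_congr rfl
  intro x _
  ring

lemma cm_rec (m N : ℕ) (hm : 2 ≤ m) (hN : 1 ≤ N) :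
    cm m N = ∑ a ∈ Finset.range ((N - 1) / m + 1), cm m a := by
  set A := (N - 1) / m + 1 with hA
  have hm0 : 0 < m := by omega
  have hf0 : ∀ f : CM m N, 1 ≤ f.1 0 := by
    intro f
    by_contra h
    have h0 : f.1 0 = 0 := by omega
    have hall : ∀ i, f.1 i = 0 := by
      intro i
      by_contra hi
      exact (f.2.2 i 0 hi (Nat.zero_le i)) h0
    have hz : f.1 = 0 := Finsupp.ext fun i => hall i
    have hv : CMval m f.1 = 0 := by rw [hz]; simp [CMval]
    have := f.2.1
    omega
  have hsplit : ∀ f : CM m N, N = f.1 0 + m * CMval m (tailF f.1) := by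
    intro f
    have := CMval_tail m f.1
    rw [f.2.1] at this
    exact this
  have toBound : ∀ f : CM m N, CMval m (tailF f.1) < A := by
    intro f
    have h1 := hsplit f
    have h2 := hf0 f
    have h3 : m * CMval m (tailF f.1) ≤ N - 1 := by omega
    have h4 : CMval m (tailF f.1) ≤ (N - 1) / m :=
      (Nat.le_div_iff_mul_le hm0).mpr (by rw [Nat.mul_comm]; omega)
    omega
  have invBound : ∀ a : Fin A, m * (a : ℕ) < N := by
    intro a
    have h1 : (a : ℕ) ≤ (N - 1) / m := by have := a.2; omega
    have h2 : m * ((N - 1) / m) ≤ N - 1 := by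
      rw [Nat.mul_comm]; exact Nat.div_mul_le_self _ _
    have h3 : m * (a : ℕ) ≤ m * ((N - 1) / m) := Nat.mul_le_mul_left m h1
    omega
  have e : CM m N ≃ Σ a : Fin A, CM m a :=
    { toFun := fun f => ⟨⟨CMval m (tailF f.1), toBound f⟩, ⟨tailF f.1, rfl,
        fun i k hi hk => f.2.2 (i + 1) (k + 1) hi (by omega)⟩⟩
      invFun := fun x => ⟨consF (N - m * (x.1 : ℕ)) x.2.1, by
          rw [CMval_tail m _, tailF_consF, consF_zero, x.2.2.1]
          have := invBound x.1
          omega, by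
          intro i k hi hk
          cases k with
          | zero =>
            rw [consF_zero]
            have := invBound x.1
            omega
          | succ k' =>
            cases i with
            | zero => omega
            | succ i' =>
              rw [consF_succ] at hi ⊢
              exact x.2.2.2 i' k' hi (by omega)⟩
      left_inv := fun f => by
        apply Subtype.ext
        have h1 := hsplit f
        show consF (N - m * CMval m (tailF f.1)) (tailF f.1) = f.1
        have h2 : N - m * CMval m (tailF f.1) = f.1 0 := by omega
        rw [h2, consF_eta]
      right_inv := fun x => by
        rcases x with ⟨⟨a, ha⟩, ⟨g, hg, hgap⟩⟩
        have hc : tailF (consF (N - m * a) g) = g := tailF_consF _ _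
        have ha' : CMval m (tailF (consF (N - m * a) g)) = a := by rw [hc]; exact hg
        refine Sigma.ext (Fin.ext ha') ((Subtype.heq_iff_coe_eq ?_).mpr hc)
        intro x
        show CMval m x = CMval m (tailF (consF (N - m * a) g)) ∧ _ ↔ CMval m x = a ∧ _
        rw [ha'] }
  have hfin : ∀ k : ℕ, Finite (CM m k) := fun k => CM_finite m k hm
  letI : ∀ a : Fin A, Fintype (CM m (a : ℕ)) := fun a => @Fintype.ofFinite _ (hfin a)
  letI : Fintype (CM m N) := @Fintype.ofFinite _ (hfin N)
  rw [cm_def, Nat.card_eq_fintype_card, Fintype.card_congr e, Fintype.card_sigma]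
  rw [← Fin.sum_univ_eq_sum_range (fun a => cm m a) A]
  apply Finset.sum_congr rfl
  intro a _
  rw [cm_def, Nat.card_eq_fintype_card]


lemma cm_zero (m : ℕ) (hm : 2 ≤ m) : cm m 0 = 1 := by
  rw [cm_def]
  haveI : Unique (CM m 0) :=
    { default := ⟨0, by simp [CMval], by intro i k hi _; simp at hi⟩
      uniq := fun f => by
        apply Subtype.ext
        ext i
        have h1 := CMval_le m f.1 i
        rw [f.2.1] at h1
        have h2 : 0 < m ^ i := Nat.pow_pos (n := i) (by omega)
        simp only [Finsupp.coe_zero, Pi.zero_apply]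
        have h3 : f.1 i * m ^ i = 0 := by omega
        rcases Nat.mul_eq_zero.mp h3 with h | h
        · exact h
        · omega }
  exact Nat.card_unique

noncomputable def Scm (m n : ℕ) : ℕ := ∑ k ∈ Finset.range n, cm m k

lemma Scm_succ (m n : ℕ) : Scm m (n + 1) = Scm m n + cm m n := Finset.sum_range_succ _ _

lemma Scm_add (m a b : ℕ) : Scm m (a + b) = Scm m a + ∑ r ∈ Finset.range b, cm m (a + r) := by
  induction b with
  | zero => simp
  | succ b ih =>
    rw [← Nat.add_assoc, Scm_succ, ih, Finset.sum_range_succ]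
    omega

lemma cm_mul (m n : ℕ) (hm : 2 ≤ m) (hn : 1 ≤ n) : cm m (m * n) = Scm m n := by
  have h := cm_rec m (m * n) hm (Nat.mul_pos (by omega) hn)
  obtain ⟨k, rfl⟩ : ∃ k, n = k + 1 := ⟨n - 1, by omega⟩
  have h1 : m * (k + 1) - 1 = (m - 1) + k * m := by
    have h2 : m * (k + 1) = k * m + m := by ring
    omega
  rw [Scm, h, h1, Nat.add_mul_div_right _ _ (by omega : 0 < m),
    Nat.div_eq_of_lt (by omega)]
  norm_num

lemma cm_rem (m n r : ℕ) (hm : 2 ≤ m) (hr : 1 ≤ r) (hrm : r < m) :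
    cm m (m * n + r) = Scm m (n + 1) := by
  have h := cm_rec m (m * n + r) hm (by omega)
  have h1 : m * n + r - 1 = (r - 1) + n * m := by
    have h2 : m * n = n * m := by ring
    omega
  rw [Scm, h, h1, Nat.add_mul_div_right _ _ (by omega : 0 < m),
    Nat.div_eq_of_lt (by omega)]
  norm_num

lemma cm_small (m k : ℕ) (hm : 2 ≤ m) (hk : k < m) : cm m k = 1 := by
  rcases Nat.eq_zero_or_pos k with rfl | hk1
  · exact cm_zero m hm
  · have := cm_rem m 0 k hm hk1 hk
    simpa [Scm, cm_zero m hm] using this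

lemma Scm_small (m r : ℕ) (hm : 2 ≤ m) (hr : r ≤ m) : Scm m r = r := by
  rw [Scm, Finset.sum_congr rfl (fun k hk => cm_small m k hm (by
    have := Finset.mem_range.mp hk; omega))]
  simp

-- key ℕ identity for the step
lemma Scm_step (m n r : ℕ) (hm : 2 ≤ m) (hn : 1 ≤ n) (hr : 1 ≤ r) (hrm : r ≤ m) :
    Scm m (m * n + r) = Scm m (m * n) + Scm m n + (r - 1) * Scm m (n + 1) := by
  rw [Scm_add]
  have h0 : ∑ s ∈ Finset.range r, cm m (m * n + s)
      = cm m (m * n) + ∑ s ∈ Finset.range (r - 1), cm m (m * n + (s + 1)) := by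
    obtain ⟨r', rfl⟩ : ∃ r', r = r' + 1 := ⟨r - 1, by omega⟩
    rw [Finset.sum_range_succ']
    simp [Nat.add_comm]
  rw [h0, cm_mul m n hm hn]
  have h1 : ∀ s ∈ Finset.range (r - 1), cm m (m * n + (s + 1)) = Scm m (n + 1) := by
    intro s hs
    have := Finset.mem_range.mp hs
    exact cm_rem m n (s + 1) hm (by omega) (by omega)
  rw [Finset.sum_congr rfl h1, Finset.sum_const, Finset.card_range, smul_eq_mul]
  ring

lemma s_mul (m : ℕ) (hm : 2 ≤ m) : ∀ n, 1 ≤ n → (Scm m (m * n) : ZMod m) = 1 - Scm m n := by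
  intro n hn
  induction n with
  | zero => omega
  | succ n ih =>
    rcases Nat.eq_zero_or_pos n with rfl | hn1
    · rw [Nat.mul_one, Scm_small m m hm le_rfl, Scm_small m 1 hm (by omega)]
      simp [ZMod.natCast_self]
    · have key : Scm m (m * (n + 1)) = Scm m (m * n) + Scm m n + (m - 1) * Scm m (n + 1) := by
        have := Scm_step m n m hm hn1 (by omega) le_rfl
        rwa [Nat.mul_succ] 
      have := ih hn1
      rw [key]
      push_cast
      rw [this, (show ((m - 1 : ℕ) : ZMod m) = -1 by
        rw [Nat.cast_sub (by omega : 1 ≤ m)]; simp)]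
      ring

lemma s_rem (m n r : ℕ) (hm : 2 ≤ m) (hn : 1 ≤ n) (hr : 1 ≤ r) (hrm : r ≤ m) :
    (Scm m (m * n + r) : ZMod m) = 1 + ((r : ZMod m) - 1) * Scm m (n + 1) := by
  rw [Scm_step m n r hm hn hr hrm]
  push_cast
  rw [s_mul m hm n hn,
    (show ((r - 1 : ℕ) : ZMod m) = (r : ZMod m) - 1 by
      rw [Nat.cast_sub (by omega : 1 ≤ r)]; simp)]
  ring

lemma sV (m : ℕ) (hm : 2 ≤ m) : ∀ (d : ℕ) (γ : ℕ → ℕ), (∀ i, i < d → γ i < m) →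
    (Scm m (1 + ∑ i ∈ Finset.range d, γ i * m ^ i) : ZMod m)
      = 1 + ∑ i ∈ Finset.range d, ∏ t ∈ Finset.range (i + 1), (γ t : ZMod m) := by
  intro d
  induction d with
  | zero =>
    intro γ _
    simp [Scm, cm_zero m hm]
  | succ d ih =>
    intro γ hγ
    set K := ∑ i ∈ Finset.range d, γ (i + 1) * m ^ i with hK
    have hsum : 1 + ∑ i ∈ Finset.range (d + 1), γ i * m ^ i = m * K + (γ 0 + 1) := by
      rw [Finset.sum_range_succ' (fun i => γ i * m ^ i) d]
      have hmk : ∑ i ∈ Finset.range d, γ (i + 1) * m ^ (i + 1) = m * K := by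
        rw [hK, Finset.mul_sum]
        exact Finset.sum_congr rfl fun x _ => by ring
      rw [hmk]
      ring
    rw [hsum]
    have hγ0 : γ 0 < m := hγ 0 (by omega)
    rcases Nat.eq_zero_or_pos K with hK0 | hK1
    · -- all higher digits vanish
      have hzero : ∀ i, i < d → γ (i + 1) = 0 := by
        intro i hi
        have h1 : γ (i + 1) * m ^ i ≤ K := by
          rw [hK]
          exact Finset.single_le_sum (f := fun i => γ (i + 1) * m ^ i)
            (fun j _ => Nat.zero_le _) (Finset.mem_range.mpr hi)
        have h2 : 0 < m ^ i := Nat.pow_pos (n := i) (by omega)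
        rcases Nat.eq_zero_or_pos (γ (i + 1)) with h | h
        · exact h
        · exfalso; nlinarith
      rw [hK0, Nat.mul_zero, Nat.zero_add, Scm_small m (γ 0 + 1) hm (by omega)]
      rw [Finset.sum_range_succ' (fun i => ∏ t ∈ Finset.range (i + 1), (γ t : ZMod m)) d]
      have hterm : ∀ i ∈ Finset.range d, ∏ t ∈ Finset.range (i + 1 + 1), (γ t : ZMod m) = 0 := by
        intro i hi
        have hd : 0 < d := by have := Finset.mem_range.mp hi; omega
        apply Finset.prod_eq_zero (Finset.mem_range.mpr (by omega : 1 < i + 1 + 1))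
        rw [hzero 0 hd]
        simp
      rw [Finset.sum_eq_zero hterm]
      simp
      push_cast
      ring
    · rw [s_rem m K (γ 0 + 1) hm hK1 (by omega) (by omega)]
      have ihK := ih (fun i => γ (i + 1)) (fun i hi => hγ (i + 1) (by omega))
      rw [Nat.add_comm K 1, ihK]
      rw [Finset.sum_range_succ' (fun i => ∏ t ∈ Finset.range (i + 1), (γ t : ZMod m)) d]
      have hprod : ∀ i, ∏ t ∈ Finset.range (i + 1 + 1), (γ t : ZMod m)
          = (∏ t ∈ Finset.range (i + 1), (γ (t + 1) : ZMod m)) * (γ 0 : ZMod m) :=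
        fun i => Finset.prod_range_succ' (fun t => (γ t : ZMod m)) (i + 1)
      rw [Finset.sum_congr rfl (fun i _ => hprod i), ← Finset.sum_mul]
      simp only [Finset.prod_range_one, Nat.zero_add]
      push_cast
      ring

lemma Icc_one_eq_map (j : ℕ) :
    Finset.Icc 1 j = (Finset.range j).map ⟨fun i => i + 1, add_left_injective 1⟩ := by
  ext x
  simp only [Finset.mem_Icc, Finset.mem_map, Finset.mem_range, Function.Embedding.coeFn_mk]
  constructor
  · intro ⟨h1, h2⟩; exact ⟨x - 1, by omega, by omega⟩
  · rintro ⟨a, ha, rfl⟩; omega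

theorem cm_congruence_ell_zero (m n j : ℕ) (α : ℕ → ℕ) (hm : 2 ≤ m) (hj : 0 < α j) (hd : ∀ i, i ≤ j → α i < m)
    (hn : n = ∑ i ∈ Finset.range (j + 1), α i * m ^ i)
    (hz : ∀ i, j < i → α i = 0) (h0 : 0 < α 0) :
    (cm m (m * n) : ℤ) ≡ (α 0 : ℤ) + ((α 0 : ℤ) - 1) *
      ∑ i ∈ Finset.Icc 1 j, ∏ t ∈ Finset.Icc 1 i, (α t : ℤ) [ZMOD (m : ℤ)] := by
  rw [← ZMod.intCast_eq_intCast_iff]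
  push_cast
  set K := ∑ i ∈ Finset.range j, α (i + 1) * m ^ i with hK
  have hnK : n = m * K + α 0 := by
    rw [hn, Finset.sum_range_succ' (fun i => α i * m ^ i) j]
    have hmk : ∑ i ∈ Finset.range j, α (i + 1) * m ^ (i + 1) = m * K := by
      rw [hK, Finset.mul_sum]; exact Finset.sum_congr rfl fun x _ => by ring
    rw [hmk]; simp
  have hn1 : 1 ≤ n := by omega
  rw [cm_mul m n hm hn1]
  have hIcc : ∑ i ∈ Finset.Icc 1 j, ∏ t ∈ Finset.Icc 1 i, ((α t : ZMod m))
      = ∑ i ∈ Finset.range j, ∏ t ∈ Finset.range (i + 1), ((α (t + 1) : ZMod m)) := by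
    rw [Icc_one_eq_map j, Finset.sum_map]
    apply Finset.sum_congr rfl
    intro i _
    simp only [Function.Embedding.coeFn_mk]
    rw [Icc_one_eq_map (i + 1), Finset.prod_map]
    simp only [Function.Embedding.coeFn_mk]
  rw [hIcc]
  rcases Nat.eq_zero_or_pos K with hK0 | hK1
  · have hα1 : ∀ i, i < j → α (i + 1) = 0 := by
      intro i hi
      have h2 := Finset.sum_eq_zero_iff.mp (by rw [← hK]; exact hK0) i (Finset.mem_range.mpr hi)
      have h3 : 0 < m ^ i := Nat.pow_pos (n := i) (by omega)
      rcases Nat.mul_eq_zero.mp h2 with h | h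
      · exact h
      · omega
    rw [hnK, hK0, Nat.mul_zero, Nat.zero_add, Scm_small m (α 0) hm (le_of_lt (hd 0 (by omega)))]
    have hzero : ∑ i ∈ Finset.range j, ∏ t ∈ Finset.range (i + 1), ((α (t + 1) : ZMod m)) = 0 := by
      apply Finset.sum_eq_zero
      intro i hi
      have hij := Finset.mem_range.mp hi
      apply Finset.prod_eq_zero (Finset.mem_range.mpr (by omega : 0 < i + 1))
      rw [hα1 0 (by omega)]; simp
    rw [hzero]; ring
  · rw [hnK, s_rem m K (α 0) hm hK1 h0 (le_of_lt (hd 0 (by omega)))]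
    have hsV : (Scm m (1 + K) : ZMod m)
        = 1 + ∑ i ∈ Finset.range j, ∏ t ∈ Finset.range (i + 1), ((α (t + 1) : ZMod m)) := by
      have := sV m hm j (fun i => α (i + 1)) (fun i hi => hd (i + 1) (by omega))
      simpa [← hK] using this
    rw [Nat.add_comm K 1, hsV]
    ring
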